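/- Uniform B-robustness of reweighted posteriors with Gamma weights: Let 𝒳 ⊆ ℝ^d, Θ ⊆ ℝ^p, and let the likelihood be f(x|θ) = exp(−g(x,θ)) where g: 𝒳×Θ→(0,∞) is differentiable in θ and the map θ ↦ log g(x,θ) is L-Lipschitz for every x ∈ 𝒳. Let κ, λ > 0 and define the reweighted posterior π_α(θ|F_n) ∝ π(θ) ∏_{i=1}^n (λ + g(X_i,θ))^{−κ}, which coincides with the M-posterior for the loss ρ(x,θ) = κ[log(λ + g(x,θ)) − log λ]; its score satisfies ‖∇_θ ρ(x,θ)‖ = κ‖∇_θ g(x,θ)‖/(λ + g(x,θ)) ≤ κL for all x, θ. If π is an upper-bounded prior with finite first moment (∫‖θ‖π(θ)dθ < ∞) such that sup_{θ∈Θ} π(θ)‖θ‖ < ∞, and the posterior is well defined, then π_α(·|F_n) is uniformly B-robust: sup_{θ∈Θ} sup_{x_0∈𝒳} |PIF(x_0; θ, ρ, F_n)| < ∞. -/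

import Mathlib

set_option maxHeartbeats 1000000

open MeasureTheory

open InnerProductSpace Filter Topology in
private lemma grad_chain' {p : ℕ} (c : ℝ) (f : EuclideanSpace ℝ (Fin p) → ℝ)
    (G : EuclideanSpace ℝ (Fin p)) (θ : EuclideanSpace ℝ (Fin p))
    (hf : HasGradientAt f G θ) (hpos : 0 < c + f θ) (κ : ℝ) :
    HasGradientAt (fun t => κ * (Real.log (c + f t) - Real.log c))
      ((κ / (c + f θ)) • G) θ := by
  have h1 : HasFDerivAt (fun t => c + f t) (toDual ℝ _ G) θ :=
    (hf.hasFDerivAt).const_add c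
  have hlog : HasDerivAt Real.log (c + f θ)⁻¹ (c + f θ) :=
    Real.hasDerivAt_log (ne_of_gt hpos)
  have h2 : HasFDerivAt (fun t => Real.log (c + f t))
      ((c + f θ)⁻¹ • (toDual ℝ _ G)) θ := HasDerivAt.comp_hasFDerivAt (f := fun t => c + f t) θ hlog h1
  have h3 : HasFDerivAt (fun t => κ * (Real.log (c + f t) - Real.log c))
      (κ • ((c + f θ)⁻¹ • (toDual ℝ _ G))) θ := ((h2.sub_const _).const_mul κ)
  have : (κ • ((c + f θ)⁻¹ • (toDual ℝ (EuclideanSpace ℝ (Fin p)) G)))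
      = toDual ℝ _ ((κ / (c + f θ)) • G) := by
    rw [_root_.map_smul, smul_smul, div_eq_mul_inv]
  rw [this] at h3
  simpa using h3.hasGradientAt

open InnerProductSpace in
private lemma grad_norm_le' {p : ℕ} (f : EuclideanSpace ℝ (Fin p) → ℝ)
    (G : EuclideanSpace ℝ (Fin p)) (θ : EuclideanSpace ℝ (Fin p))
    (hf : HasGradientAt f G θ) (hpos : 0 < f θ) (L : NNReal)
    (hLip : LipschitzWith L (fun t => Real.log (f t))) : ‖G‖ ≤ (L : ℝ) * f θ := by
  have hlog : HasDerivAt Real.log (f θ)⁻¹ (f θ) := Real.hasDerivAt_log (ne_of_gt hpos)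
  have h2 : HasFDerivAt (fun t => Real.log (f t))
      ((f θ)⁻¹ • (toDual ℝ _ G)) θ := hlog.comp_hasFDerivAt θ hf.hasFDerivAt
  have := h2.le_of_lipschitz hLip
  rw [norm_smul] at this
  have hn : ‖(toDual ℝ (EuclideanSpace ℝ (Fin p))) G‖ = ‖G‖ := by simp
  rw [hn] at this
  have h3 : (f θ)⁻¹ * ‖G‖ ≤ L := by
    simpa [abs_of_pos hpos] using this
  calc ‖G‖ = (f θ) * ((f θ)⁻¹ * ‖G‖) := by field_simp
  _ ≤ (f θ) * L := by nlinarith [hpos]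
  _ = (L:ℝ) * f θ := mul_comm _ _

private lemma abs_exp_sub_one_le' (x : ℝ) : |Real.exp x - 1| ≤ |x| * (Real.exp x + 1) := by
  have h1 := Real.add_one_le_exp (-x)
  have h2 := Real.add_one_le_exp x
  have h3 : Real.exp x * Real.exp (-x) = 1 := by
    rw [← Real.exp_add]; simp
  have hp := Real.exp_pos x
  have hq := Real.exp_pos (-x)
  rcases le_or_gt 0 x with hx | hx
  · rw [abs_of_nonneg (by nlinarith : (0:ℝ) ≤ Real.exp x - 1), abs_of_nonneg hx]
    nlinarith
  · rw [abs_of_nonpos (by nlinarith : Real.exp x - 1 ≤ 0), abs_of_neg hx]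
    nlinarith

private lemma factor_exp' (c A n B ε : ℝ) :
    c * Real.exp (-((1 - ε) * A + ε * n * B))
      = (c * Real.exp (-A)) * Real.exp (ε * (A - n * B)) := by
  have h : -((1 - ε) * A + ε * n * B) = -A + ε * (A - n * B) := by ring
  rw [h, Real.exp_add, ← mul_assoc]

open Filter Topology in
private lemma deriv_denom' {p : ℕ} (Θ : Set (EuclideanSpace ℝ (Fin p)))
    (F0 h : EuclideanSpace ℝ (Fin p) → ℝ)
    (hF0nn : ∀ t, 0 ≤ F0 t)
    (hF0int : IntegrableOn F0 Θ)
    (hεint : ∀ ε ∈ Set.Ioc (0:ℝ) (1/2), IntegrableOn (fun t => F0 t * Real.exp (ε * h t)) Θ)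
    (hdom : IntegrableOn (fun t => |h t| * (2 * F0 t + F0 t * Real.exp ((1/2) * h t))) Θ) :
    HasDerivWithinAt (fun ε => ∫ t in Θ, F0 t * Real.exp (ε * h t))
      (∫ t in Θ, h t * F0 t) (Set.Ici 0) 0 := by
  have hIoc : Set.Ioc (0:ℝ) (1/2) ∈ 𝓝[>] (0:ℝ) :=
    Ioc_mem_nhdsGT_of_mem ⟨le_refl 0, by norm_num⟩
  have key : Tendsto (fun ε => ∫ t in Θ, (F0 t * Real.exp (ε * h t) - F0 t) / ε)
      (𝓝[>] (0:ℝ)) (𝓝 (∫ t in Θ, h t * F0 t)) := by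
    apply tendsto_integral_filter_of_dominated_convergence
      (fun t => |h t| * (2 * F0 t + F0 t * Real.exp ((1/2) * h t)))
    · filter_upwards [hIoc] with ε hε
      exact (((hεint ε hε).sub hF0int).div_const ε).1
    · filter_upwards [hIoc] with ε hε
      refine Eventually.of_forall (fun t => ?_)
      have hεpos : (0:ℝ) < ε := hε.1
      have hx := abs_exp_sub_one_le' (ε * h t)
      have hle : Real.exp (ε * h t) + 1 ≤ 2 + Real.exp ((1/2) * h t) := by
        rcases le_or_gt (h t) 0 with hh | hh
        · have : Real.exp (ε * h t) ≤ 1 :=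
            Real.exp_le_one_iff.2 (mul_nonpos_of_nonneg_of_nonpos hεpos.le hh)
          nlinarith [Real.exp_pos ((1/2) * h t)]
        · have : ε * h t ≤ (1/2) * h t := by nlinarith [hε.2]
          have := Real.exp_le_exp.2 this
          linarith
      have habs : |(F0 t * Real.exp (ε * h t) - F0 t) / ε|
          = F0 t * |Real.exp (ε * h t) - 1| / ε := by
        rw [abs_div, abs_of_pos hεpos,
          show F0 t * Real.exp (ε * h t) - F0 t = F0 t * (Real.exp (ε * h t) - 1) by ring,
          abs_mul, abs_of_nonneg (hF0nn t)]
      rw [Real.norm_eq_abs, habs]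
      have h1 : F0 t * |Real.exp (ε * h t) - 1| ≤ F0 t * (|ε * h t| * (Real.exp (ε * h t) + 1)) :=
        mul_le_mul_of_nonneg_left hx (hF0nn t)
      have h2 : |ε * h t| = ε * |h t| := by rw [abs_mul, abs_of_pos hεpos]
      rw [div_le_iff₀ hεpos]
      calc F0 t * |Real.exp (ε * h t) - 1|
          ≤ F0 t * (ε * |h t| * (Real.exp (ε * h t) + 1)) := by rw [← h2]; exact h1
        _ ≤ |h t| * (2 * F0 t + F0 t * Real.exp ((1/2) * h t)) * ε := by
            nlinarith [mul_le_mul_of_nonneg_left hle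
              (mul_nonneg (mul_nonneg (hF0nn t) hεpos.le) (abs_nonneg (h t)))]
    · exact hdom
    · refine Eventually.of_forall (fun t => ?_)
      have h1 : HasDerivAt (fun ε : ℝ => ε * h t) (h t) 0 := by
        simpa using (hasDerivAt_id (0:ℝ)).mul_const (h t)
      have hd : HasDerivAt (fun ε : ℝ => F0 t * Real.exp (ε * h t)) (h t * F0 t) 0 := by
        have := (h1.exp).const_mul (F0 t)
        simpa [mul_comm] using this
      rw [hasDerivAt_iff_tendsto_slope] at hd
      have hmono : 𝓝[>] (0:ℝ) ≤ 𝓝[≠] (0:ℝ) :=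
        nhdsWithin_mono _ (fun x hx => ne_of_gt hx)
      refine (hd.mono_left hmono).congr (fun ε => ?_)
      rw [slope_def_field]
      simp [div_eq_mul_inv]
  rw [hasDerivWithinAt_iff_tendsto_slope]
  have hset : Set.Ici (0:ℝ) \ {0} = Set.Ioi 0 := by
    ext x; simp [lt_iff_le_and_ne, eq_comm]
  rw [hset]
  refine key.congr' ?_
  filter_upwards [hIoc] with ε hε
  have hsub : ∫ t in Θ, (F0 t * Real.exp (ε * h t) - F0 t) / ε
      = ((∫ t in Θ, F0 t * Real.exp (ε * h t)) - ∫ t in Θ, F0 t) / ε := by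
    rw [← integral_sub (hεint ε hε) hF0int, integral_div]
  rw [hsub, slope_def_field]
  have : (fun ε : ℝ => ∫ t in Θ, F0 t * Real.exp (ε * h t)) 0 = ∫ t in Θ, F0 t := by
    simp
  simp only [this, sub_zero]

/-- Unnormalized density of the `ε`-contaminated M-posterior at contamination point `x₀`. -/
noncomputable def contamNum {d p n : ℕ} (w : EuclideanSpace ℝ (Fin p) → ℝ)
    (ρ : EuclideanSpace ℝ (Fin d) → EuclideanSpace ℝ (Fin p) → ℝ)
    (X : Fin n → EuclideanSpace ℝ (Fin d)) (x₀ : EuclideanSpace ℝ (Fin d)) (ε : ℝ)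
    (θ : EuclideanSpace ℝ (Fin p)) : ℝ :=
  w θ * Real.exp (-((1 - ε) * ∑ i, ρ (X i) θ + ε * n * ρ x₀ θ))

/-- Density of the `ε`-contaminated M-posterior `π_n^ρ(θ | F_{n,ε,x₀})`; at `ε = 0` this is the
M-posterior `π_n^ρ(θ | F_n)`. -/
noncomputable def contamPost {d p n : ℕ} (Θ : Set (EuclideanSpace ℝ (Fin p)))
    (w : EuclideanSpace ℝ (Fin p) → ℝ)
    (ρ : EuclideanSpace ℝ (Fin d) → EuclideanSpace ℝ (Fin p) → ℝ)
    (X : Fin n → EuclideanSpace ℝ (Fin d)) (x₀ : EuclideanSpace ℝ (Fin d)) (ε : ℝ)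
    (θ : EuclideanSpace ℝ (Fin p)) : ℝ :=
  contamNum w ρ X x₀ ε θ / ∫ t in Θ, contamNum w ρ X x₀ ε t

/-- The loss of the reweighted posterior with `Γ(κ,λ)` weights for the model
`f(x|θ) = exp(−g(x,θ))`: `ρ(x,θ) = κ[log(λ + g(x,θ)) − log λ]`. -/
noncomputable def reweightedLoss {d p : ℕ} (κ lam : ℝ)
    (g : EuclideanSpace ℝ (Fin d) → EuclideanSpace ℝ (Fin p) → ℝ)
    (x : EuclideanSpace ℝ (Fin d)) (θ : EuclideanSpace ℝ (Fin p)) : ℝ :=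
  κ * (Real.log (lam + g x θ) - Real.log lam)

open InnerProductSpace Filter Topology in
/-- **Uniform B-robustness of reweighted posteriors with Gamma weights.**
For the model `f(x|θ) = exp(−g(x,θ))` with `θ ↦ log g(x,θ)` being `L`-Lipschitz, the
reweighted posterior with `Γ(κ,λ)` weights is the M-posterior with loss
`ρ(x,θ) = κ[log(λ + g(x,θ)) − log λ]`, whose score is bounded by `κL`; with an upper-bounded
prior having finite first moment and `sup_θ π(θ)‖θ‖ < ∞`, it is uniformly B-robust. -/
theorem reweighted_posterior_uniformly_B_robust {d p n : ℕ} (hn : 0 < n)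
    (𝓧 : Set (EuclideanSpace ℝ (Fin d))) (Θ : Set (EuclideanSpace ℝ (Fin p)))
    (X : Fin n → EuclideanSpace ℝ (Fin d)) (hX : ∀ i, X i ∈ 𝓧)
    (g : EuclideanSpace ℝ (Fin d) → EuclideanSpace ℝ (Fin p) → ℝ)
    (hgpos : ∀ x θ, 0 < g x θ)
    (Gg : EuclideanSpace ℝ (Fin d) → EuclideanSpace ℝ (Fin p) → EuclideanSpace ℝ (Fin p))
    (hGg : ∀ x θ, HasGradientAt (g x) (Gg x θ) θ)
    (L : NNReal) (hLip : ∀ x, LipschitzWith L (fun θ => Real.log (g x θ)))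
    (κ lam : ℝ) (hκ : 0 < κ) (hlam : 0 < lam)
    (w : EuclideanSpace ℝ (Fin p) → ℝ) (hw : ∀ θ, 0 ≤ w θ)
    (hwbdd : ∃ M : ℝ, ∀ θ ∈ Θ, w θ ≤ M)
    (hwmom : IntegrableOn (fun θ => ‖θ‖ * w θ) Θ)
    (hwnormbdd : ∃ M : ℝ, ∀ θ ∈ Θ, w θ * ‖θ‖ ≤ M)
    (hwell : ∀ ε ∈ Set.Icc (0 : ℝ) 1, ∀ x₀ ∈ 𝓧,
      IntegrableOn (fun t => contamNum w (reweightedLoss κ lam g) X x₀ ε t) Θ ∧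
      0 < ∫ t in Θ, contamNum w (reweightedLoss κ lam g) X x₀ ε t) :
    (∀ x θ, HasGradientAt (fun t => reweightedLoss κ lam g x t)
        ((κ / (lam + g x θ)) • Gg x θ) θ ∧
      ‖(κ / (lam + g x θ)) • Gg x θ‖ ≤ κ * (L : ℝ)) ∧
    ∃ C : ℝ, ∀ θ ∈ Θ, ∀ x₀ ∈ 𝓧, ∃ pif : ℝ,
      HasDerivWithinAt (fun ε => contamPost Θ w (reweightedLoss κ lam g) X x₀ ε θ)
        pif (Set.Ici 0) 0 ∧ |pif| ≤ C := by
  have hpos : ∀ x t, (0:ℝ) < lam + g x t := fun x t => by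
    have := hgpos x t; linarith
  have hgrad : ∀ x θ, HasGradientAt (fun t => reweightedLoss κ lam g x t)
      ((κ / (lam + g x θ)) • Gg x θ) θ := fun x θ => by
    have := grad_chain' lam (g x) (Gg x θ) θ (hGg x θ) (hpos x θ) κ
    simpa [reweightedLoss] using this
  have hGgle : ∀ x θ, ‖Gg x θ‖ ≤ (L:ℝ) * g x θ := fun x θ =>
    grad_norm_le' (g x) _ θ (hGg x θ) (hgpos x θ) L (hLip x)
  have hscore : ∀ x θ, ‖(κ / (lam + g x θ)) • Gg x θ‖ ≤ κ * (L:ℝ) := fun x θ => by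
    rw [norm_smul, Real.norm_eq_abs, abs_of_nonneg (div_nonneg hκ.le (hpos x θ).le),
      div_mul_eq_mul_div, div_le_iff₀ (hpos x θ)]
    nlinarith [mul_le_mul_of_nonneg_left (hGgle x θ) hκ.le,
      mul_nonneg (mul_nonneg hκ.le L.coe_nonneg) hlam.le]
  refine ⟨fun x θ => ⟨hgrad x θ, hscore x θ⟩, ?_⟩
  set ρ := reweightedLoss κ lam g with hρdef
  have hρlip : ∀ x a c, |ρ x a - ρ x c| ≤ (κ * L) * ‖a - c‖ := fun x a c => by
    have := Convex.norm_image_sub_le_of_norm_hasFDerivWithin_le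
      (f := fun t => ρ x t)
      (f' := fun t => toDual ℝ _ ((κ / (lam + g x t)) • Gg x t))
      (s := Set.univ) (C := κ * L)
      (fun t _ => ((hgrad x t).hasFDerivAt).hasFDerivWithinAt)
      (fun t _ => by
        show ‖(InnerProductSpace.toDual ℝ (EuclideanSpace ℝ (Fin p)))
          ((κ / (lam + g x t)) • Gg x t)‖ ≤ κ * ↑L
        rw [(InnerProductSpace.toDual ℝ (EuclideanSpace ℝ (Fin p))).norm_map]
        exact hscore x t) convex_univ (Set.mem_univ c) (Set.mem_univ a)
    simpa [Real.norm_eq_abs] using this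
  have hρnn : ∀ x t, 0 ≤ ρ x t := fun x t =>
    mul_nonneg hκ.le (sub_nonneg.2 (Real.log_le_log hlam (by linarith [hgpos x t])))
  have hρcont : ∀ x, Continuous fun t => ρ x t := fun x => by
    rw [continuous_iff_continuousAt]
    exact fun t => ((hgrad x t).hasFDerivAt).continuousAt
  obtain ⟨M, hM⟩ := hwbdd
  obtain ⟨M', hM'⟩ := hwnormbdd
  rcases Set.eq_empty_or_nonempty 𝓧 with hXe | ⟨x₁, hx₁⟩
  · exact ⟨0, fun θ _ x₀ hx₀ => absurd (hXe ▸ hx₀) (Set.notMem_empty x₀)⟩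
  set S : EuclideanSpace ℝ (Fin p) → ℝ := fun t => ∑ i, ρ (X i) t with hSdef
  set F0 : EuclideanSpace ℝ (Fin p) → ℝ := fun t => w t * Real.exp (-(S t)) with hF0def
  have hSnn : ∀ t, 0 ≤ S t := fun t => Finset.sum_nonneg fun i _ => hρnn _ t
  have hF0nn : ∀ t, 0 ≤ F0 t := fun t => mul_nonneg (hw t) (Real.exp_pos _).le
  have hF0w : ∀ t, F0 t ≤ w t := fun t => by
    have h1 : Real.exp (-(S t)) ≤ 1 := Real.exp_le_one_iff.2 (neg_nonpos.2 (hSnn t))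
    have := hw t
    calc F0 t = w t * Real.exp (-(S t)) := rfl
    _ ≤ w t * 1 := mul_le_mul_of_nonneg_left h1 (hw t)
    _ = w t := mul_one _
  have hfac : ∀ x₀ ε t, contamNum w ρ X x₀ ε t
      = F0 t * Real.exp (ε * (S t - (n:ℝ) * ρ x₀ t)) := fun x₀ ε t =>
    factor_exp' (w t) (S t) (n:ℝ) (ρ x₀ t) ε
  have hcNle : ∀ x₀ t, ∀ ε ∈ Set.Icc (0:ℝ) 1, contamNum w ρ X x₀ ε t ≤ w t := by
    intro x₀ t ε hε
    have harg : -((1-ε) * S t + ε * (n:ℝ) * ρ x₀ t) ≤ 0 := by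
      have h1 := hSnn t; have h2 := hρnn x₀ t
      have h3 := hε.1; have h4 := hε.2
      have h5 : (0:ℝ) ≤ (n:ℝ) := Nat.cast_nonneg n
      nlinarith [mul_nonneg (by linarith : (0:ℝ) ≤ 1 - ε) h1,
        mul_nonneg (mul_nonneg h3 h5) h2]
    have hexp : Real.exp (-((1-ε) * S t + ε * (n:ℝ) * ρ x₀ t)) ≤ 1 :=
      Real.exp_le_one_iff.2 harg
    calc contamNum w ρ X x₀ ε t
        = w t * Real.exp (-((1-ε) * S t + ε * (n:ℝ) * ρ x₀ t)) := rfl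
    _ ≤ w t * 1 := mul_le_mul_of_nonneg_left hexp (hw t)
    _ = w t := mul_one _
  have h0Icc : (0:ℝ) ∈ Set.Icc (0:ℝ) 1 := ⟨le_refl 0, zero_le_one⟩
  have heq0 : (fun t => contamNum w ρ X x₁ 0 t) = F0 := by
    funext t; rw [hfac]; simp
  have hF0int : IntegrableOn F0 Θ := by
    have := (hwell 0 h0Icc x₁ hx₁).1
    rwa [heq0] at this
  set D0 : ℝ := ∫ t in Θ, F0 t with hD0def
  have hD0pos : 0 < D0 := by
    have := (hwell 0 h0Icc x₁ hx₁).2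
    rwa [heq0] at this
  have hI1int : IntegrableOn (fun t => ‖t‖ * F0 t) Θ := by
    apply Integrable.mono' hwmom (continuous_norm.aestronglyMeasurable.mul hF0int.1)
    refine Eventually.of_forall fun t => ?_
    show ‖‖t‖ * F0 t‖ ≤ ‖t‖ * w t
    rw [Real.norm_eq_abs, abs_of_nonneg (mul_nonneg (norm_nonneg t) (hF0nn t))]
    exact mul_le_mul_of_nonneg_left (hF0w t) (norm_nonneg t)
  set I1 : ℝ := ∫ t in Θ, ‖t‖ * F0 t with hI1def
  have hI1nn : 0 ≤ I1 := integral_nonneg fun t => mul_nonneg (norm_nonneg t) (hF0nn t)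
  set b : ℝ := 2 * n * (κ * L) with hbdef
  have hbnn : 0 ≤ b := by positivity
  refine ⟨b * ((max M' 0) * D0 + (max M 0) * I1) / D0^2, ?_⟩
  intro θ hθ x₀ hx₀
  set hh : EuclideanSpace ℝ (Fin p) → ℝ := fun t => S t - (n:ℝ) * ρ x₀ t with hhdef
  have hScont : Continuous S := continuous_finset_sum _ fun i _ => hρcont (X i)
  have hhcont : Continuous hh := hScont.sub (continuous_const.mul (hρcont x₀))
  have hhlip : ∀ a c, |hh a - hh c| ≤ b * ‖a - c‖ := by
    intro a c
    have hS : |S a - S c| ≤ (n:ℝ) * ((κ*L) * ‖a - c‖) := by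
      calc |S a - S c| = |∑ i, (ρ (X i) a - ρ (X i) c)| := by
            rw [hSdef]; rw [Finset.sum_sub_distrib]
      _ ≤ ∑ i, |ρ (X i) a - ρ (X i) c| := Finset.abs_sum_le_sum_abs _ _
      _ ≤ ∑ _i : Fin n, (κ*L) * ‖a - c‖ := Finset.sum_le_sum fun i _ => hρlip (X i) a c
      _ = (n:ℝ) * ((κ*L) * ‖a-c‖) := by
            rw [Finset.sum_const, Finset.card_univ, Fintype.card_fin, nsmul_eq_mul]
    have hr : |ρ x₀ a - ρ x₀ c| ≤ (κ*L) * ‖a-c‖ := hρlip x₀ a c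
    have hn0 : (0:ℝ) ≤ (n:ℝ) := Nat.cast_nonneg n
    have habs : |hh a - hh c| ≤ |S a - S c| + (n:ℝ) * |ρ x₀ a - ρ x₀ c| := by
      have : hh a - hh c = (S a - S c) - (n:ℝ) * (ρ x₀ a - ρ x₀ c) := by
        simp only [hhdef]; ring
      rw [this]
      calc |(S a - S c) - (n:ℝ) * (ρ x₀ a - ρ x₀ c)|
          ≤ |S a - S c| + |(n:ℝ) * (ρ x₀ a - ρ x₀ c)| := abs_sub _ _
      _ = |S a - S c| + (n:ℝ) * |ρ x₀ a - ρ x₀ c| := by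
            rw [abs_mul, abs_of_nonneg hn0]
    have : (n:ℝ) * |ρ x₀ a - ρ x₀ c| ≤ (n:ℝ) * ((κ*L) * ‖a-c‖) :=
      mul_le_mul_of_nonneg_left hr hn0
    have hb : b * ‖a - c‖ = (n:ℝ) * ((κ*L) * ‖a-c‖) + (n:ℝ) * ((κ*L) * ‖a-c‖) := by
      rw [hbdef]; ring
    linarith
  set a0 : ℝ := |hh 0| with ha0def
  have ha0nn : 0 ≤ a0 := abs_nonneg _
  have hhabs : ∀ t, |hh t| ≤ a0 + b * ‖t‖ := fun t => by
    have h1 := hhlip t 0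
    rw [sub_zero] at h1
    have h2 : |hh t| ≤ |hh t - hh 0| + |hh 0| := by
      calc |hh t| = |(hh t - hh 0) + hh 0| := by ring_nf
      _ ≤ |hh t - hh 0| + |hh 0| := abs_add_le _ _
    linarith
  have hFhalf_eq : (fun t => contamNum w ρ X x₀ (1/2) t)
      = fun t => F0 t * Real.exp ((1/2) * hh t) := funext fun t => hfac x₀ (1/2) t
  have hhalfIcc : (1/2 : ℝ) ∈ Set.Icc (0:ℝ) 1 := by constructor <;> norm_num
  have hFhalf_int : IntegrableOn (fun t => F0 t * Real.exp ((1/2) * hh t)) Θ := by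
    rw [← hFhalf_eq]; exact (hwell (1/2) hhalfIcc x₀ hx₀).1
  have hFhalf_le : ∀ t, F0 t * Real.exp ((1/2) * hh t) ≤ w t := fun t => by
    have := hcNle x₀ t (1/2) hhalfIcc
    rwa [hfac x₀ (1/2) t] at this
  have hFhalf_nn : ∀ t, 0 ≤ F0 t * Real.exp ((1/2) * hh t) := fun t =>
    mul_nonneg (hF0nn t) (Real.exp_pos _).le
  have hdom : IntegrableOn
      (fun t => |hh t| * (2 * F0 t + F0 t * Real.exp ((1/2) * hh t))) Θ := by
    have hG : IntegrableOn (fun t =>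
        a0 * (2 * F0 t + F0 t * Real.exp ((1/2) * hh t)) + b * (3 * (‖t‖ * w t))) Θ :=
      (((hF0int.const_mul 2).add hFhalf_int).const_mul a0).add
        ((hwmom.const_mul 3).const_mul b)
    apply Integrable.mono' hG
      (hhcont.abs.aestronglyMeasurable.mul
        ((hF0int.1.const_mul 2).add hFhalf_int.1))
    refine Eventually.of_forall fun t => ?_
    have h1 := hhabs t
    have h2 := hF0nn t
    have h3 := hFhalf_nn t
    have h4 := hF0w t
    have h5 := hFhalf_le t
    have h6 : (0:ℝ) ≤ ‖t‖ := norm_nonneg t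
    show ‖|hh t| * (2 * F0 t + F0 t * Real.exp ((1/2) * hh t))‖
      ≤ a0 * (2 * F0 t + F0 t * Real.exp ((1/2) * hh t)) + b * (3 * (‖t‖ * w t))
    rw [Real.norm_eq_abs, abs_of_nonneg (mul_nonneg (abs_nonneg _) (by linarith))]
    have hA : |hh t| * (2 * F0 t + F0 t * Real.exp ((1/2) * hh t))
        ≤ (a0 + b * ‖t‖) * (2 * F0 t + F0 t * Real.exp ((1/2) * hh t)) :=
      mul_le_mul_of_nonneg_right h1 (by linarith)
    have hB : (b * ‖t‖) * (2 * F0 t + F0 t * Real.exp ((1/2) * hh t))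
        ≤ (b * ‖t‖) * (3 * w t) :=
      mul_le_mul_of_nonneg_left (by linarith) (mul_nonneg hbnn h6)
    nlinarith [hA, hB]
  have hεint : ∀ ε ∈ Set.Ioc (0:ℝ) (1/2),
      IntegrableOn (fun t => F0 t * Real.exp (ε * hh t)) Θ := fun ε hε => by
    have heqε : (fun t => contamNum w ρ X x₀ ε t) = fun t => F0 t * Real.exp (ε * hh t) :=
      funext fun t => hfac x₀ ε t
    rw [← heqε]
    exact (hwell ε ⟨hε.1.le, le_trans hε.2 (by norm_num)⟩ x₀ hx₀).1
  have hden := deriv_denom' Θ F0 hh hF0nn hF0int hεint hdom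
  have hnum : HasDerivAt (fun ε => F0 θ * Real.exp (ε * hh θ)) (hh θ * F0 θ) 0 := by
    have h1 : HasDerivAt (fun ε : ℝ => ε * hh θ) (hh θ) 0 := by
      simpa using (hasDerivAt_id (0:ℝ)).mul_const (hh θ)
    simpa [mul_comm] using (h1.exp).const_mul (F0 θ)
  have hhF0int : IntegrableOn (fun t => hh t * F0 t) Θ := by
    apply Integrable.mono' hdom (hhcont.aestronglyMeasurable.mul hF0int.1)
    refine Eventually.of_forall fun t => ?_
    have h2 := hF0nn t
    have h3 := hFhalf_nn t
    show ‖hh t * F0 t‖ ≤ |hh t| * (2 * F0 t + F0 t * Real.exp ((1/2) * hh t))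
    rw [Real.norm_eq_abs, abs_mul, abs_of_nonneg h2]
    nlinarith [abs_nonneg (hh t)]
  have hgoalfun : (fun ε => contamPost Θ w ρ X x₀ ε θ)
      = fun ε => (F0 θ * Real.exp (ε * hh θ)) / ∫ t in Θ, F0 t * Real.exp (ε * hh t) := by
    funext ε
    show contamNum w ρ X x₀ ε θ / (∫ t in Θ, contamNum w ρ X x₀ ε t) = _
    rw [hfac x₀ ε θ]
    congr 1
    exact congrArg _ (funext fun t => hfac x₀ ε t)
  have hDat0 : (∫ t in Θ, F0 t * Real.exp ((0:ℝ) * hh t)) = D0 := by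
    rw [hD0def]; congr 1; funext t; simp
  have hne : (∫ t in Θ, F0 t * Real.exp ((0:ℝ) * hh t)) ≠ 0 := by
    rw [hDat0]; exact ne_of_gt hD0pos
  have hdiv := (hnum.hasDerivWithinAt).div hden hne
  simp only [zero_mul, Real.exp_zero, mul_one] at hdiv
  rw [← hD0def] at hdiv
  refine ⟨_, by rw [hgoalfun]; exact hdiv, ?_⟩
  set Dp : ℝ := ∫ t in Θ, hh t * F0 t with hDpdef
  have e1 : hh θ * F0 θ * D0 - F0 θ * Dp = F0 θ * ∫ t in Θ, (hh θ - hh t) * F0 t := by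
    have h1 : ∫ t in Θ, (hh θ - hh t) * F0 t = hh θ * D0 - Dp := by
      have h2 : (fun t => (hh θ - hh t) * F0 t)
          = fun t => hh θ * F0 t - hh t * F0 t := funext fun t => by ring
      rw [h2, integral_sub (hF0int.const_mul (hh θ)) hhF0int, integral_const_mul]
    rw [h1]; ring
  have hint2 : IntegrableOn (fun t => (hh θ - hh t) * F0 t) Θ := by
    have h2 : (fun t => (hh θ - hh t) * F0 t)
        = fun t => hh θ * F0 t - hh t * F0 t := funext fun t => by ring
    rw [h2]
    exact (hF0int.const_mul (hh θ)).sub hhF0int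
  have e2 : |∫ t in Θ, (hh θ - hh t) * F0 t| ≤ b * (‖θ‖ * D0 + I1) := by
    have hRint : IntegrableOn (fun t => (b * ‖θ‖) * F0 t + b * (‖t‖ * F0 t)) Θ :=
      (hF0int.const_mul _).add (hI1int.const_mul b)
    calc |∫ t in Θ, (hh θ - hh t) * F0 t|
        ≤ ∫ t in Θ, |(hh θ - hh t) * F0 t| := by
          have := norm_integral_le_integral_norm (μ := volume.restrict Θ)
            (fun t => (hh θ - hh t) * F0 t)
          simpa only [Real.norm_eq_abs] using this
    _ ≤ ∫ t in Θ, ((b * ‖θ‖) * F0 t + b * (‖t‖ * F0 t)) := by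
          apply integral_mono hint2.abs hRint
          intro t
          show |(hh θ - hh t) * F0 t| ≤ (b * ‖θ‖) * F0 t + b * (‖t‖ * F0 t)
          have h1 := hhlip θ t
          have h2 : ‖θ - t‖ ≤ ‖θ‖ + ‖t‖ := norm_sub_le _ _
          have h3 := hF0nn t
          rw [abs_mul, abs_of_nonneg h3]
          have h4 : |hh θ - hh t| ≤ b * (‖θ‖ + ‖t‖) :=
            le_trans h1 (mul_le_mul_of_nonneg_left h2 hbnn)
          nlinarith [mul_le_mul_of_nonneg_right h4 h3]
    _ = (b * ‖θ‖) * D0 + b * I1 := by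
          rw [integral_add (hF0int.const_mul _) (hI1int.const_mul b),
            integral_const_mul, integral_const_mul, hD0def, hI1def]
    _ = b * (‖θ‖ * D0 + I1) := by ring
  have hwθ : F0 θ ≤ max M 0 := le_trans (hF0w θ) (le_trans (hM θ hθ) (le_max_left _ _))
  have hwθn : F0 θ * ‖θ‖ ≤ max M' 0 := by
    calc F0 θ * ‖θ‖ ≤ w θ * ‖θ‖ := mul_le_mul_of_nonneg_right (hF0w θ) (norm_nonneg θ)
    _ ≤ M' := hM' θ hθ
    _ ≤ max M' 0 := le_max_left _ _
  have hD0nn : 0 ≤ D0 := hD0pos.le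
  calc |(hh θ * F0 θ * D0 - F0 θ * Dp) / D0 ^ 2|
      = (F0 θ * |∫ t in Θ, (hh θ - hh t) * F0 t|) / D0 ^ 2 := by
        rw [e1, abs_div, abs_of_pos (pow_pos hD0pos 2), abs_mul, abs_of_nonneg (hF0nn θ)]
  _ ≤ (F0 θ * (b * (‖θ‖ * D0 + I1))) / D0 ^ 2 := by
        apply div_le_div_of_nonneg_right ?_ (pow_pos hD0pos 2).le
        exact mul_le_mul_of_nonneg_left e2 (hF0nn θ)
  _ ≤ b * ((max M' 0) * D0 + (max M 0) * I1) / D0 ^ 2 := by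
        have hnum2 : F0 θ * (b * (‖θ‖ * D0 + I1))
            ≤ b * ((max M' 0) * D0 + (max M 0) * I1) := by
          nlinarith [mul_le_mul_of_nonneg_right hwθn hD0nn,
            mul_le_mul_of_nonneg_right hwθ hI1nn, hbnn, hI1nn, hD0nn,
            mul_nonneg (norm_nonneg θ) hD0nn]
        exact div_le_div_of_nonneg_right hnum2 (pow_pos hD0pos 2).le
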